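/- Let the lift convolution be f_l(x) = x ⋆ K_l + b_l, where K_l stacks a kernel k_l and its horizontal flip M_2D k_l along the output channel dimension (giving 2C_out output channels) and b_l = [a; a]. Then f_l(M_2D x) = M_c M_2D (f_l(x)), where M_c swaps the two output channel groups and M_2D is the horizontal flip acting on the spatial width dimension. -/
import Mathlib


/-- Zero padding of a 1-indexed feature map of height `H` and width `W` by
`pH` rows and `pW` columns on each side. -/
def ssrPad (H W pH pW : ℕ) {ι : Type*} (x : ι → ℕ → ℕ → ℝ) : ι → ℕ → ℕ → ℝ :=
  fun i r c =>
    if pH + 1 ≤ r ∧ r ≤ pH + H ∧ pW + 1 ≤ c ∧ c ≤ pW + W then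
      x i (r - pH) (c - pW)
    else 0

/-- Strided cross-correlation (1-indexed) of a (padded) feature map `xb` with
kernel `k`, stride `s`, kernel size `KH × KW`:
`(x ⋆ k)_{o,h,w} = Σ_{i,u,v} k_{o,i,u,v} · x̄_{i,(h−1)s+u,(w−1)s+v}`. -/
def ssrCorr (s KH KW : ℕ) {ι κ : Type*} [Fintype ι]
    (k : κ → ι → ℕ → ℕ → ℝ) (xb : ι → ℕ → ℕ → ℝ) : κ → ℕ → ℕ → ℝ :=
  fun o h w =>
    ∑ i : ι, ∑ u ∈ Finset.Icc 1 KH, ∑ v ∈ Finset.Icc 1 KW,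
      k o i u v * xb i ((h - 1) * s + u) ((w - 1) * s + v)

/-- Horizontal flip of a 1-indexed feature map of width `n`. -/
def ssrFlipW (n : ℕ) {ι : Type*} (x : ι → ℕ → ℕ → ℝ) : ι → ℕ → ℕ → ℝ :=
  fun i r c => x i r (n + 1 - c)

/-- Horizontal flip of a kernel of width `KW` (`v ↦ KW + 1 − v`). -/
def ssrFlipK (KW : ℕ) {ι κ : Type*} (k : κ → ι → ℕ → ℕ → ℝ) :
    κ → ι → ℕ → ℕ → ℝ :=
  fun o i u v => k o i u (KW + 1 - v)

/-- The lift convolution: the kernel `k_l` produces the first output channel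
group and its horizontal flip `M_2D k_l` the second; the bias `a` is shared
(doubled, `[a; a]`). -/
noncomputable def ssrLift (H W pH pW s KH KW : ℕ) {Cin Cout : ℕ}
    (kl : Fin Cout → Fin Cin → ℕ → ℕ → ℝ) (a : Fin Cout → ℝ)
    (x : Fin Cin → ℕ → ℕ → ℝ) : Fin Cout ⊕ Fin Cout → ℕ → ℕ → ℝ :=
  fun o h w =>
    Sum.elim
      (fun o' => ssrCorr s KH KW kl (ssrPad H W pH pW x) o' h w + a o')
      (fun o' => ssrCorr s KH KW (ssrFlipK KW kl) (ssrPad H W pH pW x) o' h w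
          + a o')
      o


lemma ssrPad_flip (H W pH pW : ℕ) {ι : Type*} (x : ι → ℕ → ℕ → ℝ) (i : ι) (r c : ℕ) :
    ssrPad H W pH pW (ssrFlipW W x) i r c
      = ssrPad H W pH pW x i r (W + 2 * pW + 1 - c) := by
  unfold ssrPad ssrFlipW
  split_ifs with h1 h2 h2
  · have : W + 1 - (c - pW) = W + 2 * pW + 1 - c - pW := by omega
    rw [this]
  · exfalso; omega
  · exfalso; omega
  · rfl

lemma ssrCorr_flip (H W pH pW s KH KW : ℕ) {Cin Cout : ℕ}
    (hdiv : s ∣ (W + 2 * pW - KW))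
    (k : Fin Cout → Fin Cin → ℕ → ℕ → ℝ) (x : Fin Cin → ℕ → ℕ → ℝ)
    (Wo : ℕ) (hWo : Wo = (W + 2 * pW - KW) / s + 1)
    (hK : KW ≤ W + 2 * pW)
    (o : Fin Cout) (h w : ℕ) (hw1 : 1 ≤ w) (hw2 : w ≤ Wo) :
    ssrCorr s KH KW k (ssrPad H W pH pW (ssrFlipW W x)) o h w
      = ssrCorr s KH KW (ssrFlipK KW k) (ssrPad H W pH pW x) o h (Wo + 1 - w) := by
  have hD : (Wo - 1) * s = W + 2 * pW - KW := by
    rw [hWo]; simpa using Nat.div_mul_cancel hdiv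
  have hsum : (w - 1) * s + (Wo - w) * s = (Wo - 1) * s := by
    rw [← add_mul]; congr 1; omega
  unfold ssrCorr ssrFlipK
  refine Finset.sum_congr rfl fun i _ => Finset.sum_congr rfl fun u _ => ?_
  refine Finset.sum_nbij' (fun v => KW + 1 - v) (fun v => KW + 1 - v)
    (fun v hv => by simp at hv ⊢; omega) (fun v hv => by simp at hv ⊢; omega)
    (fun v hv => by simp at hv; show KW + 1 - (KW + 1 - v) = v; omega)
    (fun v hv => by simp at hv; show KW + 1 - (KW + 1 - v) = v; omega)
    (fun v hv => ?_)
  simp only [Finset.mem_Icc] at hv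
  rw [ssrPad_flip]
  have h1 : KW + 1 - (KW + 1 - v) = v := by omega
  have h2 : W + 2 * pW + 1 - ((w - 1) * s + v)
      = (Wo + 1 - w - 1) * s + (KW + 1 - v) := by
    have : Wo + 1 - w - 1 = Wo - w := by omega
    rw [this]; omega
  rw [h1, h2]

/-- The lift convolution satisfies
`f_l(M_2D x) = M_c M_2D (f_l(x))`: evaluating the lift convolution on the
horizontally flipped input at output channel `o`, row `h`, column `1 ≤ w ≤ W_o`
equals the output on the original input at the swapped channel group and the
horizontally mirrored column `W_o + 1 − w`. -/
theorem liftConvolution_equivariant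
    (Cin Cout H W pH pW KH KW s : ℕ)
    (hs : 0 < s) (hK : KW ≤ W + 2 * pW) (hdiv : s ∣ (W + 2 * pW - KW))
    (kl : Fin Cout → Fin Cin → ℕ → ℕ → ℝ) (a : Fin Cout → ℝ)
    (x : Fin Cin → ℕ → ℕ → ℝ)
    (Wo : ℕ) (hWo : Wo = (W + 2 * pW - KW) / s + 1)
    (o : Fin Cout ⊕ Fin Cout) (h w : ℕ) (hw1 : 1 ≤ w) (hw2 : w ≤ Wo) :
    ssrLift H W pH pW s KH KW kl a (ssrFlipW W x) o h w
      = ssrLift H W pH pW s KH KW kl a x (Sum.swap o) h (Wo + 1 - w) := by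
  cases o with
  | inl o' =>
      simp only [ssrLift, Sum.swap_inl, Sum.elim_inl, Sum.elim_inr]
      rw [ssrCorr_flip H W pH pW s KH KW hdiv kl x Wo hWo hK o' h w hw1 hw2]
  | inr o' =>
      simp only [ssrLift, Sum.swap_inr, Sum.elim_inl, Sum.elim_inr]
      rw [ssrCorr_flip H W pH pW s KH KW hdiv (ssrFlipK KW kl) x Wo hWo hK o' h w hw1 hw2]
      congr 1
      unfold ssrCorr ssrFlipK
      refine Finset.sum_congr rfl fun i _ => Finset.sum_congr rfl fun u _ =>
        Finset.sum_congr rfl fun v hv => ?_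
      simp only [Finset.mem_Icc] at hv
      have : KW + 1 - (KW + 1 - v) = v := by omega
      rw [this]
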